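/- arXiv:1403.3951 — 6 statements merged into one kernel-verified Lean document; each statement's English description precedes it below -/
import Mathlib

section
/- The Koranyi norm N(x,y,z) = ((x^2+y^2)^2 + z^2)^{1/4} on the Heisenberg group H = (R^3, ·) with product (x,y,z)·(x',y',z') = (x+x', y+y', z+z'+2(xy'-x'y)) defines a left-invariant metric d(g,h) = N(g^{-1}h); in particular d satisfies the triangle inequality. -/
/-- The Heisenberg group as `ℝ × ℝ × ℝ`. -/
abbrev H : Type := ℝ × ℝ × ℝ

/-- Heisenberg group multiplication. -/
def Hmul (a b : H) : H :=
  (a.1 + b.1, a.2.1 + b.2.1, a.2.2 + b.2.2 + 2 * (a.1 * b.2.1 - b.1 * a.2.1))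

/-- Heisenberg group inverse. -/
def Hinv (a : H) : H := (-a.1, -a.2.1, -a.2.2)

/-- The Koranyi norm. -/
noncomputable def KN (a : H) : ℝ :=
  ((a.1 ^ 2 + a.2.1 ^ 2) ^ 2 + a.2.2 ^ 2) ^ ((1 : ℝ) / 4)

/-- The Koranyi distance. -/
noncomputable def Hd (a b : H) : ℝ := KN (Hmul (Hinv a) b)

/-- Distance from a point to a set. -/
noncomputable def distSet (p : H) (L : Set H) : ℝ := sInf {r : ℝ | ∃ q ∈ L, r = Hd p q}

/-- The x-axis, a horizontal line. -/
def xAxis : Set H := {q : H | ∃ t : ℝ, q = (t, 0, 0)}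

/-- A general horizontal line through `g` with horizontal direction `v`. -/
def horizLine (g : H) (v : ℝ × ℝ) : Set H :=
  {q : H | ∃ t : ℝ, q = Hmul g (t * v.1, t * v.2, 0)}

/-- The non-horizontality `NH(g) = N(g⁻¹ · π̃(g))`. -/
noncomputable def NH (g : H) : ℝ := KN (Hmul (Hinv g) (g.1, g.2.1, 0))

noncomputable def F (a : H) : ℂ := (↑(a.1 ^ 2 + a.2.1 ^ 2) : ℂ) + a.2.2 * Complex.I
noncomputable def W (a : H) : ℂ := (a.1 : ℂ) + a.2.1 * Complex.I

lemma KN_eq (a : H) : KN a = Real.sqrt (‖F a‖) := by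
  have h : (0:ℝ) ≤ (a.1 ^ 2 + a.2.1 ^ 2) ^ 2 + a.2.2 ^ 2 := by positivity
  rw [Complex.norm_def, F, Complex.normSq_add_mul_I, KN,
    Real.sqrt_eq_rpow, Real.sqrt_eq_rpow, ← Real.rpow_mul h]
  norm_num

lemma F_mul (a b : H) :
    F (Hmul a b) = F a + F b + 2 * (starRingEnd ℂ) (W a) * W b := by
  apply Complex.ext <;>
    simp [F, W, Hmul, Complex.add_re, Complex.add_im, Complex.mul_re, Complex.mul_im, pow_two] <;> ring

lemma absW_le (a : H) : ‖W a‖ ≤ KN a := by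
  rw [KN_eq]
  have h1 : ‖W a‖ = Real.sqrt (a.1 ^ 2 + a.2.1 ^ 2) := by
    rw [Complex.norm_def, W, Complex.normSq_add_mul_I]
  rw [h1]
  apply Real.sqrt_le_sqrt
  calc a.1 ^ 2 + a.2.1 ^ 2 = Real.sqrt ((a.1 ^ 2 + a.2.1 ^ 2) ^ 2) := by
        rw [Real.sqrt_sq (by positivity)]
    _ ≤ ‖F a‖ := by
        rw [Complex.norm_def, F, Complex.normSq_add_mul_I]
        exact Real.sqrt_le_sqrt (by nlinarith [sq_nonneg a.2.2])

lemma KN_sub (a b : H) : KN (Hmul a b) ≤ KN a + KN b := by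
  have hFa : ‖F a‖ = KN a ^ 2 := by
    rw [KN_eq, Real.sq_sqrt (norm_nonneg _)]
  have hFb : ‖F b‖ = KN b ^ 2 := by
    rw [KN_eq, Real.sq_sqrt (norm_nonneg _)]
  have hab : ‖F (Hmul a b)‖ ≤ (KN a + KN b) ^ 2 := by
    rw [F_mul]
    calc ‖F a + F b + 2 * (starRingEnd ℂ) (W a) * W b‖
        ≤ ‖F a‖ + ‖F b‖
          + ‖2 * (starRingEnd ℂ) (W a) * W b‖ := by
          exact le_trans (norm_add_le _ _)
            (by gcongr; exact norm_add_le _ _)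
      _ = ‖F a‖ + ‖F b‖
          + 2 * ‖W a‖ * ‖W b‖ := by
          simp [norm_mul]
      _ ≤ KN a ^ 2 + KN b ^ 2 + 2 * KN a * KN b := by
          rw [hFa, hFb]
          have := absW_le a; have := absW_le b
          have h0a := norm_nonneg (W a); have h0b := norm_nonneg (W b)
          nlinarith
      _ = (KN a + KN b) ^ 2 := by ring
  have hKN0 : 0 ≤ KN a + KN b := by
    have : 0 ≤ KN a := by rw [KN_eq]; positivity
    have : 0 ≤ KN b := by rw [KN_eq]; positivity
    linarith
  calc KN (Hmul a b) = Real.sqrt (‖F (Hmul a b)‖) := KN_eq _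
    _ ≤ Real.sqrt ((KN a + KN b) ^ 2) := Real.sqrt_le_sqrt hab
    _ = KN a + KN b := Real.sqrt_sq hKN0

lemma Hmul_assoc_key (g a b : H) :
    Hmul (Hinv (Hmul g a)) (Hmul g b) = Hmul (Hinv a) b := by
  apply Prod.ext
  · simp [Hmul, Hinv]
  · apply Prod.ext
    · simp [Hmul, Hinv]
    · simp [Hmul, Hinv]; ring

lemma Hmul_chain (a b c : H) :
    Hmul (Hinv a) c = Hmul (Hmul (Hinv a) b) (Hmul (Hinv b) c) := by
  apply Prod.ext
  · simp [Hmul, Hinv]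
  · apply Prod.ext
    · simp [Hmul, Hinv]
    · simp [Hmul, Hinv]; ring


/-- The Koranyi norm defines a left-invariant metric on the Heisenberg group:
left-invariance, symmetry, vanishing exactly on the diagonal, and in particular
the triangle inequality. -/
theorem koranyi_left_invariant_metric :
    (∀ g a b : H, Hd (Hmul g a) (Hmul g b) = Hd a b) ∧
    (∀ a b : H, Hd a b = Hd b a) ∧
    (∀ a b : H, Hd a b = 0 ↔ a = b) ∧
    (∀ a b c : H, Hd a c ≤ Hd a b + Hd b c) := by
  refine ⟨?_, ?_, ?_, ?_⟩
  · intro g a b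
    unfold Hd
    rw [Hmul_assoc_key]
  · intro a b
    unfold Hd KN Hmul Hinv
    norm_num
    congr 1
    ring
  · intro a b
    unfold Hd KN
    constructor
    · intro h
      have hnn : (0:ℝ) ≤ (((Hmul (Hinv a) b).1 ^ 2 + (Hmul (Hinv a) b).2.1 ^ 2) ^ 2
          + (Hmul (Hinv a) b).2.2 ^ 2) := by positivity
      rw [Real.rpow_eq_zero hnn (by norm_num)] at h
      set X := Hmul (Hinv a) b with hX
      have q2 : X.2.2 ^ 2 = 0 := by nlinarith [sq_nonneg (X.1 ^ 2 + X.2.1 ^ 2), sq_nonneg X.2.2]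
      have q1 : (X.1 ^ 2 + X.2.1 ^ 2) ^ 2 = 0 := by nlinarith [sq_nonneg (X.1 ^ 2 + X.2.1 ^ 2), sq_nonneg X.2.2]
      have u0 : X.1 ^ 2 + X.2.1 ^ 2 = 0 := by
        exact pow_eq_zero_iff (two_ne_zero) |>.mp q1
      have e1s : X.1 ^ 2 = 0 := by nlinarith [sq_nonneg X.1, sq_nonneg X.2.1]
      have e2s : X.2.1 ^ 2 = 0 := by nlinarith [sq_nonneg X.1, sq_nonneg X.2.1]
      have e1 : X.1 = 0 := pow_eq_zero_iff (two_ne_zero) |>.mp e1s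
      have e2 : X.2.1 = 0 := pow_eq_zero_iff (two_ne_zero) |>.mp e2s
      have e3 : X.2.2 = 0 := pow_eq_zero_iff (two_ne_zero) |>.mp q2
      rw [hX] at e1 e2 e3
      simp [Hmul, Hinv] at e1 e2 e3
      have hx : a.1 = b.1 := by linarith
      have hy : a.2.1 = b.2.1 := by linarith
      have hz : a.2.2 = b.2.2 := by linear_combination -e3 + 2 * b.2.1 * e1 - 2 * b.1 * e2
      exact Prod.ext hx (Prod.ext hy hz)
    · rintro rfl
      have : Hmul (Hinv a) a = (0, 0, 0) := by
        apply Prod.ext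
        · simp [Hmul, Hinv]
        · apply Prod.ext <;> simp [Hmul, Hinv]
      rw [this]
      norm_num
  · intro a b c
    rw [show Hd a c = KN (Hmul (Hmul (Hinv a) b) (Hmul (Hinv b) c)) by
      unfold Hd; rw [← Hmul_chain]]
    exact KN_sub _ _
end

section
/- Let L be the x-axis {(t,0,0) : t ∈ R} in the Heisenberg group and p = (0,y,z). Then for all t ∈ R, f(t) := d((t,0,0), p)^4 = (t^2+y^2)^2 + (z-2ty)^2 ≥ (1/16)(y^4 + z^2). -/
/-- For p = (0,y,z) and any point (t,0,0) on the x-axis, the fourth power of the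
distance equals (t^2+y^2)^2 + (z-2ty)^2, which is at least (1/16)(y^4+z^2). -/
theorem dist_fourth_power_lower_bound (y z t : ℝ) :
    Hd (t, 0, 0) ((0 : ℝ), y, z) ^ 4 = (t ^ 2 + y ^ 2) ^ 2 + (z - 2 * t * y) ^ 2 ∧
    (t ^ 2 + y ^ 2) ^ 2 + (z - 2 * t * y) ^ 2 ≥ (1 / 16) * (y ^ 4 + z ^ 2) := by
  constructor
  · have h : Hd (t, 0, 0) ((0 : ℝ), y, z) =
        (((-t) ^ 2 + y ^ 2) ^ 2 + (z - 2 * t * y) ^ 2) ^ ((1 : ℝ) / 4) := by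
      simp [Hd, Hmul, Hinv, KN]
      ring_nf
    rw [h]
    have hnn : (0:ℝ) ≤ ((-t) ^ 2 + y ^ 2) ^ 2 + (z - 2 * t * y) ^ 2 := by positivity
    rw [← Real.rpow_natCast (_ ^ ((1:ℝ)/4)) 4, ← Real.rpow_mul hnn]
    norm_num
  · nlinarith [sq_nonneg (z - 4*t*y), sq_nonneg (t*y), sq_nonneg (t^2), sq_nonneg (y^2), sq_nonneg (z - 2*t*y)]
end

section
/- Let L be the x-axis in the Heisenberg group and p = (0,y,z). Let p_L = (0,0,z). Then (1/2)(d(p,p_L)^4 + d(p_L,L)^4)^{1/4} ≤ d(p,L) ≤ 2(d(p,p_L)^4 + d(p_L,L)^4)^{1/4}, where d(p,p_L) = |y| and d(p_L,L) = |z|^{1/2}. -/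
lemma Hd_to_axis (y z t : ℝ) :
    Hd ((0 : ℝ), y, z) ((t : ℝ), 0, 0)
      = ((t ^ 2 + y ^ 2) ^ 2 + (2 * t * y - z) ^ 2) ^ ((1 : ℝ) / 4) := by
  simp only [Hd, Hmul, Hinv, KN]
  ring_nf

lemma key_ineq (y z t : ℝ) :
    (y ^ 4 + z ^ 2) / 16 ≤ (t ^ 2 + y ^ 2) ^ 2 + (2 * t * y - z) ^ 2 := by
  nlinarith [sq_nonneg ((64 / 7) * t * y - (7 / 2) * z), sq_nonneg (t * y), sq_nonneg t,
    sq_nonneg y, sq_nonneg (t ^ 2), sq_nonneg z]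

/-- For p = (0,y,z) and L the x-axis, with p_L = (0,0,z), d(p,p_L) = |y| and
d(p_L,L) = |z|^(1/2), we have the two-sided comparison of d(p,L) with
(d(p,p_L)^4 + d(p_L,L)^4)^(1/4). -/
theorem dist_to_line_comparison (y z : ℝ) :
    (1 / 2) * (|y| ^ 4 + (|z| ^ ((1 : ℝ) / 2)) ^ 4) ^ ((1 : ℝ) / 4)
      ≤ distSet ((0 : ℝ), y, z) xAxis ∧
    distSet ((0 : ℝ), y, z) xAxis
      ≤ 2 * (|y| ^ 4 + (|z| ^ ((1 : ℝ) / 2)) ^ 4) ^ ((1 : ℝ) / 4) := by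
  have habs : |y| ^ 4 + (|z| ^ ((1 : ℝ) / 2)) ^ 4 = y ^ 4 + z ^ 2 := by
    have h1 : |y| ^ 4 = y ^ 4 := by
      rw [← abs_pow]; exact abs_of_nonneg (by positivity)
    have h2 : (|z| ^ ((1 : ℝ) / 2)) ^ 4 = z ^ 2 := by
      rw [← Real.rpow_natCast (|z| ^ ((1 : ℝ) / 2)) 4, ← Real.rpow_mul (abs_nonneg z)]
      norm_num
    rw [h1, h2]
  set A : ℝ := y ^ 4 + z ^ 2 with hA
  have hA0 : 0 ≤ A := by positivity
  rw [habs]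
  set S : Set ℝ := {r : ℝ | ∃ q ∈ xAxis, r = Hd ((0 : ℝ), y, z) q} with hS
  have hmem : ∀ r, r ∈ S ↔ ∃ t : ℝ, r = ((t ^ 2 + y ^ 2) ^ 2 + (2 * t * y - z) ^ 2) ^ ((1 : ℝ) / 4) := by
    intro r
    constructor
    · rintro ⟨q, ⟨t, rfl⟩, rfl⟩
      exact ⟨t, (Hd_to_axis y z t)⟩
    · rintro ⟨t, rfl⟩
      exact ⟨(t, 0, 0), ⟨t, rfl⟩, (Hd_to_axis y z t).symm⟩
  have hne : S.Nonempty := by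
    refine ⟨((0 ^ 2 + y ^ 2) ^ 2 + (2 * 0 * y - z) ^ 2) ^ ((1 : ℝ) / 4), (hmem _).2 ⟨0, rfl⟩⟩
  have hlb : ∀ r ∈ S, (1 / 2) * A ^ ((1 : ℝ) / 4) ≤ r := by
    intro r hr
    obtain ⟨t, rfl⟩ := (hmem r).1 hr
    have h1 : (A / 16) ^ ((1 : ℝ) / 4)
        ≤ ((t ^ 2 + y ^ 2) ^ 2 + (2 * t * y - z) ^ 2) ^ ((1 : ℝ) / 4) :=
      Real.rpow_le_rpow (by positivity) (key_ineq y z t) (by norm_num)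
    have h2 : (A / 16) ^ ((1 : ℝ) / 4) = A ^ ((1 : ℝ) / 4) / 2 := by
      rw [Real.div_rpow hA0 (by norm_num : (0:ℝ) ≤ 16)]
      congr 1
      rw [show (16 : ℝ) = (2 : ℝ) ^ (4 : ℕ) by norm_num,
        show ((1 : ℝ) / 4) = ((4 : ℕ) : ℝ)⁻¹ by norm_num,
        Real.pow_rpow_inv_natCast (by norm_num) (by norm_num)]
    linarith [h1, h2.symm ▸ h1]
  have hbdd : BddBelow S := ⟨(1 / 2) * A ^ ((1 : ℝ) / 4), hlb⟩
  constructor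
  · exact le_csInf hne hlb
  · have hM : distSet ((0 : ℝ), y, z) xAxis ≤ A ^ ((1 : ℝ) / 4) := by
      have : A ^ ((1 : ℝ) / 4) ∈ S := by
        refine (hmem _).2 ⟨0, ?_⟩
        norm_num [hA]
        ring_nf
      exact csInf_le hbdd this
    have : (0 : ℝ) ≤ A ^ ((1 : ℝ) / 4) := Real.rpow_nonneg hA0 _
    calc distSet ((0 : ℝ), y, z) xAxis ≤ A ^ ((1 : ℝ) / 4) := hM
      _ ≤ 2 * A ^ ((1 : ℝ) / 4) := by linarith
end

section
/- Let L be the x-axis in the Heisenberg group, p = (0,y,z), p_L = (0,0,z), and let P_L(p) = (0,0,0) be the point of L below p_L. Then d(p, P_L(p)) ≤ 4 d(p, L). -/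

lemma rpow_quarter_le (a b : ℝ) (ha : 0 ≤ a) (hb : 0 ≤ b) (h : a ≤ 256 * b) :
    a ^ ((1:ℝ)/4) ≤ 4 * b ^ ((1:ℝ)/4) := by
  have h1 : a ^ ((1:ℝ)/4) ≤ (256 * b) ^ ((1:ℝ)/4) :=
    Real.rpow_le_rpow ha h (by norm_num)
  have h2 : ((256:ℝ) * b) ^ ((1:ℝ)/4) = (256:ℝ) ^ ((1:ℝ)/4) * b ^ ((1:ℝ)/4) :=
    Real.mul_rpow (by norm_num) hb
  have h3 : (256:ℝ) ^ ((1:ℝ)/4) = 4 := by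
    rw [show (256:ℝ) = (4:ℝ) ^ (4:ℕ) by norm_num, ← Real.rpow_natCast,
      ← Real.rpow_mul (by norm_num)]
    norm_num
  rw [h2, h3] at h1
  exact h1

/-- For p = (0,y,z) and L the x-axis, P_L(p) = (0,0,0) and
d(p, P_L(p)) is at most 4 d(p, L). -/
theorem dist_to_projection_le (y z : ℝ) :
    Hd ((0 : ℝ), y, z) ((0 : ℝ), (0 : ℝ), (0 : ℝ)) ≤ 4 * distSet ((0 : ℝ), y, z) xAxis := by
  have hne : {r : ℝ | ∃ q ∈ xAxis, r = Hd ((0:ℝ), y, z) q}.Nonempty :=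
    ⟨Hd ((0:ℝ), y, z) ((0:ℝ), 0, 0), ⟨((0:ℝ), 0, 0), ⟨0, rfl⟩, rfl⟩⟩
  have key : ∀ r ∈ {r : ℝ | ∃ q ∈ xAxis, r = Hd ((0:ℝ), y, z) q},
      Hd ((0:ℝ), y, z) ((0:ℝ), (0:ℝ), (0:ℝ)) / 4 ≤ r := by
    rintro r ⟨q, ⟨t, rfl⟩, rfl⟩
    rw [div_le_iff₀ (by norm_num : (0:ℝ) < 4), mul_comm]
    simp only [Hd, Hmul, Hinv, KN]
    apply rpow_quarter_le
    · positivity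
    · positivity
    · ring_nf
      nlinarith [sq_nonneg (33*t*y - 16*z), sq_nonneg (33*t*y + 16*z), sq_nonneg (t*y),
        sq_nonneg z, sq_nonneg (y^2), sq_nonneg (t^2)]
  have h := le_csInf hne key
  have : Hd ((0:ℝ), y, z) ((0:ℝ), (0:ℝ), (0:ℝ)) / 4 ≤ distSet ((0:ℝ), y, z) xAxis := h
  linarith
end

section
/- For every a, b in the Heisenberg group and every horizontal line L, max{d(a,L), d(b,L)} ≥ (1/16)·NH(a^{-1}b)^2 / d(a,b). (Note the right-hand side is independent of L; it suffices to prove this when L is the x-axis.) -/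
lemma KN_nonneg (g : H) : 0 ≤ KN g := Real.rpow_nonneg (by positivity) _

lemma KN_pow_four (g : H) : KN g ^ 4 = (g.1 ^ 2 + g.2.1 ^ 2) ^ 2 + g.2.2 ^ 2 := by
  unfold KN
  rw [← Real.rpow_natCast (_ ^ ((1:ℝ)/4)) 4, ← Real.rpow_mul (by positivity)]
  norm_num

lemma abs_fst_le (g : H) : |g.1| ≤ KN g := by
  rw [← pow_le_pow_iff_left₀ (abs_nonneg _) (KN_nonneg g) (by norm_num : (4:ℕ) ≠ 0)]
  rw [KN_pow_four, Even.pow_abs (by decide)]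
  nlinarith [sq_nonneg g.2.1, sq_nonneg g.2.2, sq_nonneg (g.1*g.2.1), sq_nonneg (g.1^2+g.2.1^2)]

lemma abs_snd_le (g : H) : |g.2.1| ≤ KN g := by
  rw [← pow_le_pow_iff_left₀ (abs_nonneg _) (KN_nonneg g) (by norm_num : (4:ℕ) ≠ 0)]
  rw [KN_pow_four, Even.pow_abs (by decide)]
  nlinarith [sq_nonneg g.1, sq_nonneg g.2.2, sq_nonneg (g.1*g.2.1), sq_nonneg (g.1^2+g.2.1^2)]

lemma abs_z_le (g : H) : |g.2.2| ≤ KN g ^ 2 := by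
  have h4 := KN_pow_four g
  have h0 := KN_nonneg g
  rw [← pow_le_pow_iff_left₀ (abs_nonneg _) (by positivity) (by norm_num : (2:ℕ) ≠ 0)]
  rw [Even.pow_abs (by decide)]
  nlinarith [sq_nonneg (g.1^2+g.2.1^2)]

lemma Hmul_cancel (x y z : H) :
    Hmul (Hmul (Hinv x) y) (Hmul (Hinv y) z) = Hmul (Hinv x) z := by
  simp only [Hmul, Hinv, Prod.mk.injEq]
  refine ⟨by ring, by ring, by ring⟩

lemma KN_swap (x y : H) : KN (Hmul (Hinv x) y) = KN (Hmul (Hinv y) x) := by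
  simp only [KN, Hmul, Hinv]
  ring_nf

lemma line_z (g : H) (v : ℝ × ℝ) (s t : ℝ) :
    (Hmul (Hinv (Hmul g (s*v.1, s*v.2, 0))) (Hmul g (t*v.1, t*v.2, 0))).2.2 = 0 := by
  simp only [Hmul, Hinv]
  ring

lemma Hd_pos (a b : H) (h : a ≠ b) : 0 < Hd a b := by
  unfold Hd KN
  apply Real.rpow_pos_of_pos
  set c := Hmul (Hinv a) b with hc
  rcases lt_or_eq_of_le (show (0:ℝ) ≤ (c.1 ^ 2 + c.2.1 ^ 2) ^ 2 + c.2.2 ^ 2 by positivity) with h'|h'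
  · exact h'
  · exfalso
    have hsum : c.1 ^ 2 + c.2.1 ^ 2 = 0 := by nlinarith [sq_nonneg (c.1^2+c.2.1^2), sq_nonneg c.2.2]
    have h1 : c.1 = 0 := by nlinarith [sq_nonneg c.1, sq_nonneg c.2.1]
    have h2 : c.2.1 = 0 := by nlinarith [sq_nonneg c.1, sq_nonneg c.2.1]
    have h3 : c.2.2 = 0 := by nlinarith [sq_nonneg (c.1^2+c.2.1^2)]
    apply h
    have e1 : -a.1 + b.1 = 0 := h1
    have e2 : -a.2.1 + b.2.1 = 0 := h2
    have e3 : -a.2.2 + b.2.2 + 2 * (-a.1 * b.2.1 - b.1 * -a.2.1) = 0 := h3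
    have hx : a.1 = b.1 := by linarith
    have hy : a.2.1 = b.2.1 := by linarith
    rw [← hx, ← hy] at e3
    exact Prod.ext (by linarith) (Prod.ext (by linarith) (by nlinarith [e3]))

lemma NH_sq (c : H) : NH c ^ 2 = |c.2.2| := by
  have h : Hmul (Hinv c) (c.1, c.2.1, 0) = ((0:ℝ), (0:ℝ), -c.2.2) := by
    simp only [Hmul, Hinv, Prod.mk.injEq]
    refine ⟨by ring, by ring, by ring⟩
  rw [NH, h, KN]
  simp only []
  rw [← Real.rpow_natCast (_ ^ ((1:ℝ)/4)) 2, ← Real.rpow_mul (by positivity)]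
  norm_num
  rw [← Real.sqrt_eq_rpow, Real.sqrt_sq_eq_abs]

lemma mul_abs_le {x y X Y : ℝ} (hx : |x| ≤ X) (hy : |y| ≤ Y) : |x * y| ≤ X * Y := by
  rw [abs_mul]
  exact mul_le_mul hx hy (abs_nonneg _) (le_trans (abs_nonneg _) hx)


lemma distSet_nonneg (p : H) (L : Set H) : 0 ≤ distSet p L := by
  apply Real.sInf_nonneg
  rintro x ⟨q, hq, rfl⟩
  exact KN_nonneg _

lemma exists_near (p : H) (g : H) (v : ℝ × ℝ) {ε : ℝ} (hε : 0 < ε) :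
    ∃ q ∈ horizLine g v, Hd p q < distSet p (horizLine g v) + ε := by
  have hne : {r : ℝ | ∃ q ∈ horizLine g v, r = Hd p q}.Nonempty :=
    ⟨Hd p (Hmul g (0 * v.1, 0 * v.2, 0)), ⟨Hmul g (0 * v.1, 0 * v.2, 0), ⟨0, rfl⟩, rfl⟩⟩
  obtain ⟨x, ⟨q, hq, rfl⟩, hx⟩ := Real.lt_sInf_add_pos hne hε
  exact ⟨q, hq, hx⟩

lemma comp_fst (u m w : H) : (Hmul (Hmul u m) w).1 = u.1 + m.1 + w.1 := rfl

lemma comp_snd (u m w : H) : (Hmul (Hmul u m) w).2.1 = u.2.1 + m.2.1 + w.2.1 := rfl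

lemma comp_z (u m w : H) (hm : m.2.2 = 0) :
    (Hmul (Hmul u m) w).2.2
      = u.2.2 + 2 * (u.1 * m.2.1 - m.1 * u.2.1) + w.2.2
        + 2 * ((u.1 + m.1) * w.2.1 - w.1 * (u.2.1 + m.2.1)) := by
  simp only [Hmul]
  rw [hm]
  ring

lemma arith_key (U1 U2 U3 W1 W2 W3 M1 M2 C1 C2 C3 ρ d : ℝ)
    (hρ : 0 < ρ) (hd : 0 < d)
    (hU1 : |U1| ≤ ρ) (hU2 : |U2| ≤ ρ) (hU3 : |U3| ≤ ρ ^ 2)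
    (hW1 : |W1| ≤ ρ) (hW2 : |W2| ≤ ρ) (hW3 : |W3| ≤ ρ ^ 2)
    (hC1 : |C1| ≤ d) (hC2 : |C2| ≤ d) (hC3 : |C3| ≤ d ^ 2)
    (e1 : C1 = U1 + M1 + W1) (e2 : C2 = U2 + M2 + W2)
    (e3 : C3 = U3 + 2 * (U1 * M2 - M1 * U2) + W3 + 2 * ((U1 + M1) * W2 - W1 * (U2 + M2))) :
    |C3| ≤ 16 * d * ρ := by
  have hu1 := abs_le.mp hU1
  have hu2 := abs_le.mp hU2
  have hu3 := abs_le.mp hU3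
  have hw1 := abs_le.mp hW1
  have hw2 := abs_le.mp hW2
  have hw3 := abs_le.mp hW3
  have hc1 := abs_le.mp hC1
  have hc2 := abs_le.mp hC2
  have hc3 := abs_le.mp hC3
  have hm1 : |M1| ≤ d + 2 * ρ := abs_le.mpr ⟨by linarith, by linarith⟩
  have hm2 : |M2| ≤ d + 2 * ρ := abs_le.mpr ⟨by linarith, by linarith⟩
  have hum1 : |U1 + M1| ≤ d + ρ := abs_le.mpr ⟨by linarith, by linarith⟩
  have hum2 : |U2 + M2| ≤ d + ρ := abs_le.mpr ⟨by linarith, by linarith⟩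
  have p1 := abs_le.mp (mul_abs_le hU1 hm2)
  have p2 := abs_le.mp (mul_abs_le hm1 hU2)
  have p3 := abs_le.mp (mul_abs_le hum1 hW2)
  have p4 := abs_le.mp (mul_abs_le hW1 hum2)
  have hbound : |C3| ≤ 14 * ρ ^ 2 + 8 * (d * ρ) := by
    rw [e3]
    apply abs_le.mpr
    constructor <;> linarith [p1.1, p1.2, p2.1, p2.2, p3.1, p3.2, p4.1, p4.2,
      hu3.1, hu3.2, hw3.1, hw3.2]
  have hB := abs_le.mp hbound
  rcases le_or_gt d (16 * ρ) with hcase | hcase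
  · have hdd : d * d ≤ 16 * ρ * d := mul_le_mul_of_nonneg_right hcase hd.le
    apply abs_le.mpr
    constructor <;> linarith [hc3.1, hc3.2, hdd]
  · have hrr : ρ * (16 * ρ) ≤ ρ * d := mul_le_mul_of_nonneg_left hcase.le hρ.le
    apply abs_le.mpr
    constructor <;> linarith [hB.1, hB.2, hrr]


/-- For every pair of distinct points a, b in the Heisenberg group and every
horizontal line L, the max of their distances to L is at least
(1/16) NH(a⁻¹b)^2 / d(a,b). -/
theorem NH_min_beta (a b : H) (hab : a ≠ b) (g : H) (v : ℝ × ℝ) (hv : v ≠ 0) :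
    max (distSet a (horizLine g v)) (distSet b (horizLine g v))
      ≥ (1 / 16) * NH (Hmul (Hinv a) b) ^ 2 / Hd a b := by
  have hd : 0 < Hd a b := Hd_pos a b hab
  have hzd : |(Hmul (Hinv a) b).2.2| ≤ Hd a b ^ 2 := abs_z_le _
  have hr0 : 0 ≤ max (distSet a (horizLine g v)) (distSet b (horizLine g v)) :=
    le_trans (distSet_nonneg a _) (le_max_left _ _)
  have key : |(Hmul (Hinv a) b).2.2|
      ≤ 16 * Hd a b * max (distSet a (horizLine g v)) (distSet b (horizLine g v)) := by
    apply le_of_forall_pos_le_add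
    intro δ hδ
    have hε : 0 < δ / (16 * Hd a b) := by positivity
    obtain ⟨p, hpL, hp⟩ := exists_near a g v hε
    obtain ⟨q, hqL, hq⟩ := exists_near b g v hε
    obtain ⟨s, hs⟩ := hpL
    obtain ⟨t, ht⟩ := hqL
    have hρ : 0 < max (distSet a (horizLine g v)) (distSet b (horizLine g v))
        + δ / (16 * Hd a b) := by positivity
    have hKu : KN (Hmul (Hinv a) p)
        ≤ max (distSet a (horizLine g v)) (distSet b (horizLine g v)) + δ / (16 * Hd a b) := by
      have h1 : Hd a p < distSet a (horizLine g v) + δ / (16 * Hd a b) := hp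
      have h2 := le_max_left (distSet a (horizLine g v)) (distSet b (horizLine g v))
      have : KN (Hmul (Hinv a) p) = Hd a p := rfl
      linarith [this ▸ h1]
    have hKw : KN (Hmul (Hinv q) b)
        ≤ max (distSet a (horizLine g v)) (distSet b (horizLine g v)) + δ / (16 * Hd a b) := by
      have h1 : Hd b q < distSet b (horizLine g v) + δ / (16 * Hd a b) := hq
      have h2 := le_max_right (distSet a (horizLine g v)) (distSet b (horizLine g v))
      have h3 : KN (Hmul (Hinv q) b) = Hd b q := (KN_swap q b).trans rfl
      linarith [h3 ▸ h1]
    have hm3 : (Hmul (Hinv p) q).2.2 = 0 := by rw [hs, ht]; exact line_z g v s t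
    have hc : Hmul (Hinv a) b
        = Hmul (Hmul (Hmul (Hinv a) p) (Hmul (Hinv p) q)) (Hmul (Hinv q) b) := by
      rw [Hmul_cancel a p q, Hmul_cancel a q b]
    have hc1 : (Hmul (Hinv a) b).1
        = (Hmul (Hinv a) p).1 + (Hmul (Hinv p) q).1 + (Hmul (Hinv q) b).1 := by
      rw [hc]; exact comp_fst _ _ _
    have hc2 : (Hmul (Hinv a) b).2.1
        = (Hmul (Hinv a) p).2.1 + (Hmul (Hinv p) q).2.1 + (Hmul (Hinv q) b).2.1 := by
      rw [hc]; exact comp_snd _ _ _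
    have hc3 : (Hmul (Hinv a) b).2.2
        = (Hmul (Hinv a) p).2.2
          + 2 * ((Hmul (Hinv a) p).1 * (Hmul (Hinv p) q).2.1
            - (Hmul (Hinv p) q).1 * (Hmul (Hinv a) p).2.1)
          + (Hmul (Hinv q) b).2.2
          + 2 * (((Hmul (Hinv a) p).1 + (Hmul (Hinv p) q).1) * (Hmul (Hinv q) b).2.1
            - (Hmul (Hinv q) b).1 * ((Hmul (Hinv a) p).2.1 + (Hmul (Hinv p) q).2.1)) := by
      rw [hc]; exact comp_z _ _ _ hm3
    have hsq : ∀ x : H, ∀ ρ : ℝ, 0 ≤ ρ → KN x ≤ ρ → |x.2.2| ≤ ρ ^ 2 := by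
      intro x ρ h0 hK
      refine (abs_z_le x).trans ?_
      nlinarith [KN_nonneg x]
    have harr := arith_key (Hmul (Hinv a) p).1 (Hmul (Hinv a) p).2.1 (Hmul (Hinv a) p).2.2
      (Hmul (Hinv q) b).1 (Hmul (Hinv q) b).2.1 (Hmul (Hinv q) b).2.2
      (Hmul (Hinv p) q).1 (Hmul (Hinv p) q).2.1
      (Hmul (Hinv a) b).1 (Hmul (Hinv a) b).2.1 (Hmul (Hinv a) b).2.2
      _ _ hρ hd
      ((abs_fst_le _).trans hKu) ((abs_snd_le _).trans hKu) (hsq _ _ hρ.le hKu)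
      ((abs_fst_le _).trans hKw) ((abs_snd_le _).trans hKw) (hsq _ _ hρ.le hKw)
      (abs_fst_le _) (abs_snd_le _) (abs_z_le _)
      hc1 hc2 hc3
    have hcalc : 16 * Hd a b * (max (distSet a (horizLine g v)) (distSet b (horizLine g v))
        + δ / (16 * Hd a b))
        = 16 * Hd a b * max (distSet a (horizLine g v)) (distSet b (horizLine g v)) + δ := by
      field_simp
    rw [hcalc] at harr; linarith
  rw [ge_iff_le, div_le_iff₀ hd, NH_sq]
  nlinarith [key]
end

section
/- Two-point sets in the Heisenberg group can have positive beta number: for a = 0 and b = (0,0,1), every horizontal line L satisfies max{d(a,L), d(b,L)} ≥ 1/16. Hence inf over horizontal lines L of max{d(a,L),d(b,L)} is at least 1/16 > 0. -/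
/-- Key algebraic fact: if a point is Koranyi-close to the origin and another
point is Koranyi-close to `(0,0,1)`, and their vertical gap equals twice the
symplectic form of their horizontal parts, we get a contradiction. -/
lemma key_alg (X1 Y1 Z1 X2 Y2 Z2 : ℝ)
    (hz : Z2 - Z1 = 2 * (X1 * Y2 - X2 * Y1))
    (h1 : (X1 ^ 2 + Y1 ^ 2) ^ 2 + Z1 ^ 2 < (1/16 : ℝ) ^ 4)
    (h2 : (X2 ^ 2 + Y2 ^ 2) ^ 2 + (Z2 - 1) ^ 2 < (1/16 : ℝ) ^ 4) : False := by
  have hA : X1 ^ 2 + Y1 ^ 2 < 1/256 := by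
    nlinarith [sq_nonneg (X1^2+Y1^2), sq_nonneg (X1^2+Y1^2 + 1/256)]
  have hB : X2 ^ 2 + Y2 ^ 2 < 1/256 := by
    nlinarith [sq_nonneg (X2^2+Y2^2), sq_nonneg (X2^2+Y2^2 + 1/256)]
  have hZ1 : Z1 ^ 2 < 1/65536 := by nlinarith [sq_nonneg (X1^2+Y1^2)]
  have hZ2 : (Z2 - 1) ^ 2 < 1/65536 := by nlinarith [sq_nonneg (X2^2+Y2^2)]
  nlinarith [sq_nonneg (X1 - Y2), sq_nonneg (X2 + Y1), sq_nonneg (Z1 + 1/256),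
    sq_nonneg (Z2 - 1 + 1/256), sq_nonneg X1, sq_nonneg Y1, sq_nonneg X2, sq_nonneg Y2]

/-- Unpacking the Koranyi norm: `KN a < c` gives a polynomial inequality. -/
lemma pow4_of_KN_lt {a : H} {c : ℝ} (h : KN a < c) :
    (a.1 ^ 2 + a.2.1 ^ 2) ^ 2 + a.2.2 ^ 2 < c ^ 4 := by
  set w := (a.1 ^ 2 + a.2.1 ^ 2) ^ 2 + a.2.2 ^ 2 with hwdef
  have hw : 0 ≤ w := by positivity
  have hkn : 0 ≤ KN a := by unfold KN; positivity
  have hwe : w = (KN a) ^ (4:ℕ) := by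
    unfold KN
    rw [← Real.rpow_natCast (w ^ ((1:ℝ)/4)) 4, ← Real.rpow_mul hw]
    norm_num
  rw [hwe]
  exact pow_lt_pow_left₀ h hkn (by norm_num)

/-- The two-point set consisting of the origin and (0,0,1) has a positive beta
number: every horizontal line L satisfies max of distances at least 1/16. -/
theorem two_point_positive_beta (g : H) (v : ℝ × ℝ) (hv : v ≠ 0) :
    max (distSet ((0 : ℝ), (0 : ℝ), (0 : ℝ)) (horizLine g v))
        (distSet ((0 : ℝ), (0 : ℝ), (1 : ℝ)) (horizLine g v)) ≥ 1 / 16 := by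
  by_contra hcon
  push_neg at hcon
  rw [max_lt_iff] at hcon
  obtain ⟨h0, h1⟩ := hcon
  have hne : ∀ p : H, {r : ℝ | ∃ q ∈ horizLine g v, r = Hd p q}.Nonempty := by
    intro p
    exact ⟨Hd p (Hmul g (0 * v.1, 0 * v.2, 0)), ⟨_, ⟨0, rfl⟩, rfl⟩⟩
  obtain ⟨r0, ⟨q0, ⟨s, hs⟩, hr0⟩, hr0lt⟩ := exists_lt_of_csInf_lt (hne _) h0
  obtain ⟨r1, ⟨q1, ⟨t, ht⟩, hr1⟩, hr1lt⟩ := exists_lt_of_csInf_lt (hne _) h1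
  subst hs ht hr0 hr1
  unfold Hd at hr0lt hr1lt
  have H0 := pow4_of_KN_lt hr0lt
  have H1 := pow4_of_KN_lt hr1lt
  simp only [Hmul, Hinv] at H0 H1
  have H0' : ((g.1 + s * v.1) ^ 2 + (g.2.1 + s * v.2) ^ 2) ^ 2 +
      (g.2.2 + 2 * s * (g.1 * v.2 - g.2.1 * v.1)) ^ 2 < (1/16 : ℝ) ^ 4 := by
    ring_nf at H0 ⊢; linarith [H0]
  have H1' : ((g.1 + t * v.1) ^ 2 + (g.2.1 + t * v.2) ^ 2) ^ 2 +
      ((g.2.2 + 2 * t * (g.1 * v.2 - g.2.1 * v.1)) - 1) ^ 2 < (1/16 : ℝ) ^ 4 := by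
    ring_nf at H1 ⊢; linarith [H1]
  exact key_alg (g.1 + s * v.1) (g.2.1 + s * v.2) (g.2.2 + 2 * s * (g.1 * v.2 - g.2.1 * v.1))
    (g.1 + t * v.1) (g.2.1 + t * v.2) (g.2.2 + 2 * t * (g.1 * v.2 - g.2.1 * v.1))
    (by ring) H0' H1'
end
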